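/- For any permutation σ ∈ S_n, the sum of the elements of DEX(σ) equals maj(σ) − exc(σ), where DEX(σ) is the descent set of the word σ̄ over the alphabet 1̄ < 2̄ < ··· < n̄ < 1 < 2 < ··· < n obtained from σ by replacing σ_i with σ̄_i whenever σ_i > i. -/

import Mathlib

open scoped Classical

/-- The number of excedances of `σ ∈ S_n` (positions `i` with `σ(i) > i`). -/
def excNum {n : ℕ} (σ : Equiv.Perm (Fin n)) : ℕ :=
  (Finset.univ.filter (fun i : Fin n => (i : ℕ) < (σ i : ℕ))).card

/-- The major index of `σ ∈ S_n`: the sum of the (1-based) descent positions. -/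
def majNum {n : ℕ} (σ : Equiv.Perm (Fin n)) : ℕ :=
  ∑ i ∈ (Finset.range n).filter (fun i =>
      ∃ h : i + 1 < n, σ ⟨i + 1, h⟩ < σ ⟨i, Nat.lt_of_succ_lt h⟩), (i + 1)

/-- The letter at position `i` of the barred word `σ̄` over the alphabet
`1̄ < 2̄ < ⋯ < n̄ < 1 < 2 < ⋯ < n`, encoded in `ℤ`: the barred letter `k̄`
becomes `k - (n+1)` and the unbarred letter `k` stays `k`.  Position `i`
carries a bar exactly when it is an excedance, i.e. `σ(i) > i` in 1-based
terms. -/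
def barredVal {n : ℕ} (σ : Equiv.Perm (Fin n)) (i : Fin n) : ℤ :=
  if (i : ℕ) < (σ i : ℕ) then ((σ i : ℕ) + 1 : ℤ) - (n + 1) else ((σ i : ℕ) + 1 : ℤ)

/-- `DEX(σ)`, the set of (1-based) descent positions of the barred word `σ̄`,
recorded as 0-based indices `i` (position `i+1`). -/
def DEXset {n : ℕ} (σ : Equiv.Perm (Fin n)) : Finset ℕ :=
  (Finset.range n).filter (fun i =>
    ∃ h : i + 1 < n, barredVal σ ⟨i + 1, h⟩ < barredVal σ ⟨i, Nat.lt_of_succ_lt h⟩)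

/-- Excedance indicator as a function `ℕ → ℤ` (0 outside `[0,n)`). -/
noncomputable def cfun (n : ℕ) (σ : Equiv.Perm (Fin n)) (i : ℕ) : ℤ :=
  if h : i < n then (if (i : ℕ) < (σ ⟨i, h⟩ : ℕ) then 1 else 0) else 0

lemma cfun_top (n : ℕ) (σ : Equiv.Perm (Fin n)) : cfun n σ n = 0 := by
  rw [cfun, dif_neg (lt_irrefl n)]

lemma tele (f : ℕ → ℤ) (n : ℕ) :
    ∑ i ∈ Finset.range n, (((i : ℤ) + 1) * (f (i + 1) - f i))
      = (n : ℤ) * f n - ∑ i ∈ Finset.range n, f i := by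
  induction n with
  | zero => simp
  | succ m ih =>
      rw [Finset.sum_range_succ, ih, Finset.sum_range_succ]
      push_cast; ring

lemma key (n : ℕ) (σ : Equiv.Perm (Fin n)) (i : ℕ) (hi : i < n) :
    (if (∃ h : i + 1 < n, barredVal σ ⟨i + 1, h⟩ < barredVal σ ⟨i, Nat.lt_of_succ_lt h⟩)
        then (1:ℤ) else 0)
      = (if (∃ h : i + 1 < n, σ ⟨i + 1, h⟩ < σ ⟨i, Nat.lt_of_succ_lt h⟩) then (1:ℤ) else 0)
        + cfun n σ (i + 1) - cfun n σ i := by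
  by_cases h1 : i + 1 < n
  · have hP : (∃ h : i + 1 < n, barredVal σ ⟨i + 1, h⟩ < barredVal σ ⟨i, Nat.lt_of_succ_lt h⟩) ↔
        barredVal σ ⟨i + 1, h1⟩ < barredVal σ ⟨i, hi⟩ :=
      ⟨fun ⟨_, hp⟩ => hp, fun hp => ⟨h1, hp⟩⟩
    have hQ : (∃ h : i + 1 < n, σ ⟨i + 1, h⟩ < σ ⟨i, Nat.lt_of_succ_lt h⟩) ↔
        σ ⟨i + 1, h1⟩ < σ ⟨i, hi⟩ :=
      ⟨fun ⟨_, hp⟩ => hp, fun hp => ⟨h1, hp⟩⟩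
    have hne : (σ ⟨i, hi⟩ : ℕ) ≠ (σ ⟨i + 1, h1⟩ : ℕ) := by
      intro h
      have h2 : i = i + 1 :=
        congrArg Fin.val (σ.injective (Fin.val_injective h))
      omega
    have ha : (σ ⟨i, hi⟩ : ℕ) < n := Fin.is_lt _
    have hb : (σ ⟨i + 1, h1⟩ : ℕ) < n := Fin.is_lt _
    simp only [hP, hQ]
    simp only [barredVal, cfun, dif_pos hi, dif_pos h1, Fin.lt_def, Fin.val_mk]
    split_ifs <;> omega
  · have hP : ¬ (∃ h : i + 1 < n, barredVal σ ⟨i + 1, h⟩ < barredVal σ ⟨i, Nat.lt_of_succ_lt h⟩) :=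
      fun ⟨h, _⟩ => h1 h
    have hQ : ¬ (∃ h : i + 1 < n, σ ⟨i + 1, h⟩ < σ ⟨i, Nat.lt_of_succ_lt h⟩) :=
      fun ⟨h, _⟩ => h1 h
    have hv : (σ ⟨i, hi⟩ : ℕ) < n := Fin.is_lt _
    have hci : cfun n σ i = 0 := by
      rw [cfun, dif_pos hi, if_neg (by omega)]
    have hci1 : cfun n σ (i + 1) = 0 := by rw [cfun, dif_neg h1]
    rw [if_neg hP, if_neg hQ, hci, hci1]; ring

/-- For any `σ ∈ S_n`, the sum of the elements of `DEX(σ)` equals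
`maj(σ) - exc(σ)`. -/
theorem sum_DEX_eq_maj_sub_exc (n : ℕ) (σ : Equiv.Perm (Fin n)) :
    ((∑ i ∈ DEXset σ, (i + 1) : ℕ) : ℤ) = (majNum σ : ℤ) - (excNum σ : ℤ) := by
  have hsum : ((∑ i ∈ DEXset σ, (i + 1) : ℕ) : ℤ)
      = ∑ i ∈ Finset.range n, (((i:ℤ) + 1) *
          (if (∃ h : i + 1 < n, barredVal σ ⟨i + 1, h⟩ < barredVal σ ⟨i, Nat.lt_of_succ_lt h⟩)
            then (1:ℤ) else 0)) := by
    rw [DEXset, Finset.sum_filter, Nat.cast_sum]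
    refine Finset.sum_congr rfl fun i _ => ?_
    split_ifs <;> push_cast <;> ring
  have hmaj : (majNum σ : ℤ)
      = ∑ i ∈ Finset.range n, (((i:ℤ) + 1) *
          (if (∃ h : i + 1 < n, σ ⟨i + 1, h⟩ < σ ⟨i, Nat.lt_of_succ_lt h⟩)
            then (1:ℤ) else 0)) := by
    rw [majNum, Finset.sum_filter, Nat.cast_sum]
    refine Finset.sum_congr rfl fun i _ => ?_
    split_ifs <;> push_cast <;> ring
  have hexc : (excNum σ : ℤ) = ∑ i ∈ Finset.range n, cfun n σ i := by
    rw [← Fin.sum_univ_eq_sum_range (fun i => cfun n σ i) n]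
    have hpt : ∀ i : Fin n, cfun n σ (i : ℕ) = if (i : ℕ) < (σ i : ℕ) then (1:ℤ) else 0 := by
      intro i
      rw [cfun, dif_pos i.isLt]
    simp only [hpt]
    rw [excNum, Finset.sum_boole]
  have hmain : ∑ i ∈ Finset.range n, (((i:ℤ) + 1) *
          (if (∃ h : i + 1 < n, barredVal σ ⟨i + 1, h⟩ < barredVal σ ⟨i, Nat.lt_of_succ_lt h⟩)
            then (1:ℤ) else 0))
      = ∑ i ∈ Finset.range n, ((((i:ℤ) + 1) *
          (if (∃ h : i + 1 < n, σ ⟨i + 1, h⟩ < σ ⟨i, Nat.lt_of_succ_lt h⟩)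
            then (1:ℤ) else 0))
          + ((i:ℤ) + 1) * (cfun n σ (i + 1) - cfun n σ i)) := by
    refine Finset.sum_congr rfl fun i hi => ?_
    rw [key n σ i (Finset.mem_range.mp hi)]; ring
  rw [hsum, hmaj, hexc, hmain, Finset.sum_add_distrib, tele (cfun n σ) n, cfun_top]
  ring
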